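/- Let M and N be closed convex subsets of ℝ̂ with M ≅ N. Then there exists a matrix Z ∈ M₂(ℝ̄) such that PC(Z) = M and PR(Z) = N. -/

import Mathlib

open scoped Classical ENNReal

/-- The tropical semiring `ℝ̄ = ℝ ∪ {-∞}`, carried by `WithBot ℝ`;
tropical addition is `max` and tropical multiplication is `+`. -/
abbrev Rb : Type := WithBot ℝ

/-- Tropical matrix multiplication. -/
noncomputable def tMul {n : ℕ} (A B : Fin n → Fin n → Rb) : Fin n → Fin n → Rb :=
  fun i j => Finset.univ.sup fun k => A i k + B k j

/-- The column space of a matrix: all tropical linear combinations of its columns. -/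
def ColSpace {n : ℕ} (A : Fin n → Fin n → Rb) : Set (Fin n → Rb) :=
  {v | ∃ c : Fin n → Rb, ∀ i, v i = Finset.univ.sup fun j => c j + A i j}

/-- The row space of a matrix: all tropical linear combinations of its rows. -/
def RowSpace {n : ℕ} (A : Fin n → Fin n → Rb) : Set (Fin n → Rb) :=
  {v | ∃ c : Fin n → Rb, ∀ j, v j = Finset.univ.sup fun i => c i + A i j}

abbrev Mat2 : Type := Fin 2 → Fin 2 → Rb

/-- Inclusion of `ℝ̄` into the projective line `ℝ̂ = ℝ ∪ {-∞, +∞}` (modelled by `EReal`). -/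
noncomputable def toE : Rb → EReal := WithBot.recBotCoe ⊥ (fun r : ℝ => (r : EReal))

/-- Projection of a vector `(a, b)` to `b - a ∈ ℝ̂`. -/
noncomputable def projPt (v : Fin 2 → Rb) : EReal := toE (v 1) - toE (v 0)

def zeroVec : Fin 2 → Rb := fun _ => ⊥

/-- Projective column space. -/
noncomputable def PC (A : Mat2) : Set EReal :=
  {z | ∃ v ∈ ColSpace A, v ≠ zeroVec ∧ projPt v = z}

/-- Projective row space. -/
noncomputable def PR (A : Mat2) : Set EReal :=
  {z | ∃ v ∈ RowSpace A, v ≠ zeroVec ∧ projPt v = z}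

/-- The metric `δ` on `ℝ̂`. -/
noncomputable def delta (x y : EReal) : ℝ≥0∞ :=
  if (∃ a : ℝ, x = (a : EReal)) ∧ (∃ b : ℝ, y = (b : EReal)) then
    ENNReal.ofReal |x.toReal - y.toReal|
  else if x = y then 0 else ⊤

/-- `M` embeds isometrically into `N`. -/
def IsomEmbed (M N : Set EReal) : Prop :=
  ∃ f : EReal → EReal, Set.MapsTo f M N ∧ Set.InjOn f M ∧
    ∀ x ∈ M, ∀ y ∈ M, delta (f x) (f y) = delta x y

/-- `M` and `N` are isometric. -/
def Isom (M N : Set EReal) : Prop :=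
  ∃ f : EReal → EReal, Set.BijOn f M N ∧
    ∀ x ∈ M, ∀ y ∈ M, delta (f x) (f y) = delta x y

/-- Closed convex subsets of `ℝ̂`: the empty set, singletons and closed intervals. -/
def IsClosedConvex (S : Set EReal) : Prop :=
  S = ∅ ∨ ∃ x y : EReal, x ≤ y ∧ S = Set.Icc x y


section Aux

-- ==================== basic lemmas ====================

@[simp] lemma toE_bot : toE ⊥ = ⊥ := rfl
@[simp] lemma toE_coe (r : ℝ) : toE (r : Rb) = (r : EReal) := rfl

lemma sup2 (f : Fin 2 → Rb) : Finset.univ.sup f = f 0 ⊔ f 1 := by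
  rw [show (Finset.univ : Finset (Fin 2)) = {0,1} by rfl]; simp

lemma ne_zeroVec_iff (v : Fin 2 → Rb) : v ≠ zeroVec ↔ (v 0 ≠ ⊥ ∨ v 1 ≠ ⊥) := by
  constructor
  · intro h
    by_contra hc
    push_neg at hc
    exact h (funext fun i => by fin_cases i <;> simp [hc.1, hc.2, zeroVec])
  · rintro (h | h) hv <;> rw [hv] at h <;> exact h rfl

lemma rb_cases (a : Rb) : a = ⊥ ∨ ∃ r : ℝ, a = (r : Rb) := by
  cases a with
  | none => exact Or.inl rfl
  | some r => exact Or.inr ⟨r, rfl⟩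

lemma ereal_cases (x : EReal) : x = ⊥ ∨ (∃ r : ℝ, x = (r : EReal)) ∨ x = ⊤ := by
  induction x using EReal.rec with
  | bot => exact Or.inl rfl
  | coe r => exact Or.inr (Or.inl ⟨r, rfl⟩)
  | top => exact Or.inr (Or.inr rfl)

lemma projPt_of_bot_snd (v : Fin 2 → Rb) (h : v 1 = ⊥) : projPt v = ⊥ := by
  rw [projPt, h, toE_bot, EReal.bot_sub]

lemma projPt_of_bot_fst (v : Fin 2 → Rb) (h : v 0 = ⊥) (h1 : v 1 ≠ ⊥) : projPt v = ⊤ := by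
  obtain (h' | ⟨r, hr⟩) := rb_cases (v 1)
  · exact absurd h' h1
  · rw [projPt, h, hr, toE_bot, toE_coe, EReal.sub_bot (by simp)]

lemma projPt_coe (v : Fin 2 → Rb) (a b : ℝ) (h0 : v 0 = (a:Rb)) (h1 : v 1 = (b:Rb)) :
    projPt v = ((b - a : ℝ) : EReal) := by
  rw [projPt, h0, h1, toE_coe, toE_coe, ← EReal.coe_sub]

lemma projPt_eq_top_iff (v : Fin 2 → Rb) (hv : v ≠ zeroVec) : projPt v = ⊤ ↔ v 0 = ⊥ := by
  constructor
  · intro h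
    by_contra h0
    obtain (h' | ⟨a, ha⟩) := rb_cases (v 0); · exact h0 h'
    obtain (h' | ⟨b, hb⟩) := rb_cases (v 1)
    · rw [projPt_of_bot_snd v h'] at h; exact absurd h (by simp)
    · rw [projPt_coe v a b ha hb] at h; exact EReal.coe_ne_top _ h
  · intro h
    have h1 : v 1 ≠ ⊥ := by
      rcases (ne_zeroVec_iff v).1 hv with h' | h'
      · exact absurd h h'
      · exact h'
    exact projPt_of_bot_fst v h h1

lemma projPt_eq_bot_iff (v : Fin 2 → Rb) (hv : v ≠ zeroVec) : projPt v = ⊥ ↔ v 1 = ⊥ := by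
  constructor
  · intro h
    by_contra h1
    obtain (h' | ⟨b, hb⟩) := rb_cases (v 1); · exact h1 h'
    obtain (h' | ⟨a, ha⟩) := rb_cases (v 0)
    · rw [projPt_of_bot_fst v h' h1] at h; exact absurd h (by simp)
    · rw [projPt_coe v a b ha hb] at h; exact EReal.coe_ne_bot _ h
  · exact projPt_of_bot_snd v

lemma fst_real_of_proj_le (v : Fin 2 → Rb) (p : ℝ) (hv : v ≠ zeroVec)
    (h : projPt v ≤ (p : EReal)) : ∃ a : ℝ, v 0 = (a : Rb) := by
  obtain (h0 | h0) := rb_cases (v 0)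
  · rw [(projPt_eq_top_iff v hv).2 h0] at h
    exact absurd h (by simp [EReal.coe_lt_top])
  · exact h0

lemma snd_real_of_proj_ge (v : Fin 2 → Rb) (q : ℝ) (_hv : v ≠ zeroVec)
    (h : (q : EReal) ≤ projPt v) : ∃ b : ℝ, v 1 = (b : Rb) := by
  obtain (h1 | h1) := rb_cases (v 1)
  · rw [projPt_of_bot_snd v h1] at h
    exact absurd h (by simp)
  · exact h1

lemma snd_le_of_proj_le (v : Fin 2 → Rb) (p a : ℝ) (h0 : v 0 = (a : Rb))
    (h : projPt v ≤ (p : EReal)) : v 1 ≤ ((a + p : ℝ) : Rb) := by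
  obtain (h1 | ⟨b, hb⟩) := rb_cases (v 1)
  · rw [h1]; exact bot_le
  · rw [projPt_coe v a b h0 hb] at h
    rw [hb, WithBot.coe_le_coe]
    have : b - a ≤ p := by exact_mod_cast h
    linarith

lemma fst_le_of_proj_ge (v : Fin 2 → Rb) (q b : ℝ) (h1 : v 1 = (b : Rb))
    (h : (q : EReal) ≤ projPt v) : v 0 ≤ ((b - q : ℝ) : Rb) := by
  obtain (h0 | ⟨a, ha⟩) := rb_cases (v 0)
  · rw [h0]; exact bot_le
  · rw [projPt_coe v a b ha h1] at h
    rw [ha, WithBot.coe_le_coe]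
    have : q ≤ b - a := by exact_mod_cast h
    linarith

-- ==================== span machinery ====================

def Span2 (u w : Fin 2 → Rb) : Set (Fin 2 → Rb) :=
  {v | ∃ c0 c1 : Rb, ∀ i, v i = (c0 + u i) ⊔ (c1 + w i)}

noncomputable def PSpan (u w : Fin 2 → Rb) : Set EReal :=
  {z | ∃ v ∈ Span2 u w, v ≠ zeroVec ∧ projPt v = z}

lemma proj_ub (u w v : Fin 2 → Rb) (c0 c1 : Rb)
    (hc : ∀ i, v i = (c0 + u i) ⊔ (c1 + w i))
    (hu : u ≠ zeroVec) (hw : w ≠ zeroVec) :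
    projPt v ≤ projPt u ⊔ projPt w := by
  obtain (hP | ⟨p, hP⟩ | hP) := ereal_cases (projPt u ⊔ projPt w)
  · rw [hP]
    have h2 := sup_eq_bot_iff.1 hP
    have hu1 := (projPt_eq_bot_iff u hu).1 h2.1
    have hw1 := (projPt_eq_bot_iff w hw).1 h2.2
    have : v 1 = ⊥ := by rw [hc 1, hu1, hw1]; simp
    rw [projPt_of_bot_snd v this]
  · rw [hP]
    have hup : projPt u ≤ (p : EReal) := hP ▸ le_sup_left
    have hwp : projPt w ≤ (p : EReal) := hP ▸ le_sup_right
    obtain ⟨a, ha⟩ := fst_real_of_proj_le u p hu hup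
    obtain ⟨a', ha'⟩ := fst_real_of_proj_le w p hw hwp
    have hu1 := snd_le_of_proj_le u p a ha hup
    have hw1 := snd_le_of_proj_le w p a' ha' hwp
    have key : v 1 ≤ v 0 + ((p : ℝ) : Rb) := by
      rw [hc 1, hc 0]
      calc (c0 + u 1) ⊔ (c1 + w 1)
          ≤ (c0 + ((a + p : ℝ) : Rb)) ⊔ (c1 + ((a' + p : ℝ) : Rb)) :=
            sup_le_sup (add_le_add_right hu1 c0) (add_le_add_right hw1 c1)
        _ = ((c0 + u 0) ⊔ (c1 + w 0)) + ((p:ℝ) : Rb) := by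
            rw [ha, ha', ← max_add_add_right]
            push_cast
            simp [add_assoc]
    obtain (h0 | ⟨s, hs⟩) := rb_cases (v 0)
    · have : v 1 = ⊥ := by
        rw [h0] at key; simpa using key
      rw [projPt_of_bot_snd v this]; exact bot_le
    · obtain (h1 | ⟨t, ht⟩) := rb_cases (v 1)
      · rw [projPt_of_bot_snd v h1]; exact bot_le
      · rw [projPt_coe v s t hs ht]
        rw [hs, ht, ← WithBot.coe_add, WithBot.coe_le_coe] at key
        exact_mod_cast (by linarith : t - s ≤ p)
  · rw [hP]; exact le_top

lemma proj_lb (u w v : Fin 2 → Rb) (c0 c1 : Rb)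
    (hc : ∀ i, v i = (c0 + u i) ⊔ (c1 + w i))
    (hu : u ≠ zeroVec) (hw : w ≠ zeroVec) (hv : v ≠ zeroVec) :
    projPt u ⊓ projPt w ≤ projPt v := by
  obtain (hQ | ⟨q, hQ⟩ | hQ) := ereal_cases (projPt u ⊓ projPt w)
  · rw [hQ]; exact bot_le
  · rw [hQ]
    have huq : (q : EReal) ≤ projPt u := hQ ▸ inf_le_left
    have hwq : (q : EReal) ≤ projPt w := hQ ▸ inf_le_right
    obtain ⟨b, hb⟩ := snd_real_of_proj_ge u q hu huq
    obtain ⟨b', hb'⟩ := snd_real_of_proj_ge w q hw hwq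
    have hu0 := fst_le_of_proj_ge u q b hb huq
    have hw0 := fst_le_of_proj_ge w q b' hb' hwq
    have key : v 0 + ((q : ℝ) : Rb) ≤ v 1 := by
      rw [hc 1, hc 0]
      calc ((c0 + u 0) ⊔ (c1 + w 0)) + ((q:ℝ):Rb)
          = (c0 + u 0 + ((q:ℝ):Rb)) ⊔ (c1 + w 0 + ((q:ℝ):Rb)) := by
            rw [← max_add_add_right]
        _ ≤ (c0 + u 1) ⊔ (c1 + w 1) := by
            apply sup_le_sup
            · calc c0 + u 0 + ((q:ℝ):Rb) ≤ c0 + ((b - q : ℝ):Rb) + ((q:ℝ):Rb) := by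
                    exact add_le_add_left (add_le_add_right hu0 c0) _
                _ = c0 + u 1 := by
                    rw [hb, add_assoc, ← WithBot.coe_add, sub_add_cancel]
            · calc c1 + w 0 + ((q:ℝ):Rb) ≤ c1 + ((b' - q : ℝ):Rb) + ((q:ℝ):Rb) := by
                    exact add_le_add_left (add_le_add_right hw0 c1) _
                _ = c1 + w 1 := by
                    rw [hb', add_assoc, ← WithBot.coe_add, sub_add_cancel]
    obtain (h1 | ⟨t, ht⟩) := rb_cases (v 1)
    · rw [h1] at key
      have h0 : v 0 = ⊥ := by
        obtain (h0 | ⟨s, hs⟩) := rb_cases (v 0)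
        · exact h0
        · rw [hs, ← WithBot.coe_add] at key; exact absurd key (by simp)
      exact absurd ((ne_zeroVec_iff v).1 hv) (by simp [h0, h1])
    · obtain (h0 | ⟨s, hs⟩) := rb_cases (v 0)
      · rw [projPt_of_bot_fst v h0 (by rw [ht]; exact WithBot.coe_ne_bot)]
        exact le_top
      · rw [projPt_coe v s t hs ht]
        rw [hs, ht, ← WithBot.coe_add, WithBot.coe_le_coe] at key
        exact_mod_cast (by linarith : q ≤ t - s)
  · have h2 : projPt u = ⊤ ∧ projPt w = ⊤ := by
      have l1 : projPt u ⊓ projPt w ≤ projPt u := inf_le_left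
      have l2 : projPt u ⊓ projPt w ≤ projPt w := inf_le_right
      rw [hQ] at l1 l2
      exact ⟨top_le_iff.1 l1, top_le_iff.1 l2⟩
    have hu0 := (projPt_eq_top_iff u hu).1 h2.1
    have hw0 := (projPt_eq_top_iff w hw).1 h2.2
    have h0 : v 0 = ⊥ := by rw [hc 0, hu0, hw0]; simp
    have h1 : v 1 ≠ ⊥ := by
      rcases (ne_zeroVec_iff v).1 hv with h' | h'
      · exact absurd h0 h'
      · exact h'
    rw [projPt_of_bot_fst v h0 h1, hQ]

lemma PSpan_comm (u w : Fin 2 → Rb) : PSpan u w = PSpan w u := by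
  have key : ∀ a b : Fin 2 → Rb, PSpan a b ⊆ PSpan b a := by
    rintro a b z ⟨v, ⟨c0, c1, hc⟩, hv, rfl⟩
    exact ⟨v, ⟨c1, c0, fun i => (hc i).trans (sup_comm _ _)⟩, hv, rfl⟩
  exact Set.Subset.antisymm (key u w) (key w u)

lemma mem_PSpan_left (u w : Fin 2 → Rb) (hu : u ≠ zeroVec) : projPt u ∈ PSpan u w := by
  refine ⟨u, ⟨0, ⊥, fun i => ?_⟩, hu, rfl⟩
  simp

lemma mem_PSpan_right (u w : Fin 2 → Rb) (hw : w ≠ zeroVec) : projPt w ∈ PSpan u w := by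
  rw [PSpan_comm]; exact mem_PSpan_left w u hw

lemma mem_PSpan_mid (s t : Fin 2 → Rb) (r : ℝ) (hs : s ≠ zeroVec) (ht : t ≠ zeroVec)
    (h1 : projPt s ≤ (r : EReal)) (h2 : (r : EReal) ≤ projPt t) :
    (r : EReal) ∈ PSpan s t := by
  obtain ⟨a, ha⟩ := fst_real_of_proj_le s r hs h1
  obtain ⟨b, hb⟩ := snd_real_of_proj_ge t r ht h2
  set c0 : Rb := ((-a : ℝ) : Rb) with hc0
  set c1 : Rb := ((r - b : ℝ) : Rb) with hc1
  set v : Fin 2 → Rb := fun i => (c0 + s i) ⊔ (c1 + t i) with hv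
  have hv0 : v 0 = ((0:ℝ) : Rb) := by
    have e1 : c0 + s 0 = ((0:ℝ) : Rb) := by rw [ha, hc0, ← WithBot.coe_add]; norm_num
    have e2 : c1 + t 0 ≤ ((0:ℝ) : Rb) := by
      calc c1 + t 0 ≤ c1 + ((b - r : ℝ) : Rb) :=
            add_le_add_right (fst_le_of_proj_ge t r b hb h2) c1
        _ = ((0:ℝ):Rb) := by rw [hc1, ← WithBot.coe_add]; norm_num
    rw [hv]; dsimp only; rw [e1]; exact sup_eq_left.2 (e1 ▸ e2)
  have hv1 : v 1 = (r : Rb) := by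
    have e2 : c1 + t 1 = (r : Rb) := by rw [hb, hc1, ← WithBot.coe_add]; norm_num
    have e1 : c0 + s 1 ≤ (r : Rb) := by
      calc c0 + s 1 ≤ c0 + ((a + r : ℝ) : Rb) :=
            add_le_add_right (snd_le_of_proj_le s r a ha h1) c0
        _ = (r:Rb) := by rw [hc0, ← WithBot.coe_add]; norm_num
    rw [hv]; dsimp only; rw [e2]; exact sup_eq_right.2 (e2 ▸ e1)
  refine ⟨v, ⟨c0, c1, fun i => rfl⟩, ?_, ?_⟩
  · rw [ne_zeroVec_iff]; right; rw [hv1]; exact WithBot.coe_ne_bot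
  · rw [projPt_coe v 0 r hv0 hv1]; norm_num

lemma PSpan_eq_Icc (u w : Fin 2 → Rb) (hu : u ≠ zeroVec) (hw : w ≠ zeroVec) :
    PSpan u w = Set.Icc (projPt u ⊓ projPt w) (projPt u ⊔ projPt w) := by
  apply Set.Subset.antisymm
  · rintro z ⟨v, ⟨c0, c1, hc⟩, hv, rfl⟩
    exact ⟨proj_lb u w v c0 c1 hc hu hw hv, proj_ub u w v c0 c1 hc hu hw⟩
  · rintro z ⟨h1, h2⟩
    obtain (rfl | ⟨r, rfl⟩ | rfl) := ereal_cases z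
    · have hm : projPt u ⊓ projPt w = ⊥ := le_bot_iff.1 h1
      rcases min_eq_bot.1 hm with h | h
      · exact h ▸ mem_PSpan_left u w hu
      · exact h ▸ mem_PSpan_right u w hw
    · rcases le_total (projPt u) (projPt w) with hle | hle
      · rw [inf_eq_left.2 hle] at h1
        rw [sup_eq_right.2 hle] at h2
        exact mem_PSpan_mid u w r hu hw h1 h2
      · rw [inf_eq_right.2 hle] at h1
        rw [sup_eq_left.2 hle] at h2
        rw [PSpan_comm]
        exact mem_PSpan_mid w u r hw hu h1 h2
    · have hm : projPt u ⊔ projPt w = ⊤ := top_le_iff.1 h2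
      rcases max_eq_top.1 hm with h | h
      · exact h ▸ mem_PSpan_left u w hu
      · exact h ▸ mem_PSpan_right u w hw

-- ==================== PC / PR reductions ====================

lemma ColSpace_eq (Z : Mat2) : ColSpace Z = Span2 (fun i => Z i 0) (fun i => Z i 1) := by
  ext v
  constructor
  · rintro ⟨c, hc⟩
    exact ⟨c 0, c 1, fun i => by rw [hc i, sup2]⟩
  · rintro ⟨c0, c1, hc⟩
    refine ⟨![c0, c1], fun i => ?_⟩
    rw [hc i, sup2]
    simp

lemma RowSpace_eq (Z : Mat2) : RowSpace Z = Span2 (Z 0) (Z 1) := by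
  ext v
  constructor
  · rintro ⟨c, hc⟩
    exact ⟨c 0, c 1, fun j => by rw [hc j, sup2]⟩
  · rintro ⟨c0, c1, hc⟩
    refine ⟨![c0, c1], fun j => ?_⟩
    rw [hc j, sup2]
    simp

lemma PC_eq (Z : Mat2) : PC Z = PSpan (fun i => Z i 0) (fun i => Z i 1) := by
  unfold PC PSpan
  rw [ColSpace_eq]

lemma PR_eq (Z : Mat2) : PR Z = PSpan (Z 0) (Z 1) := by
  unfold PR PSpan
  rw [RowSpace_eq]

lemma projPt_shift (v u : Fin 2 → Rb) (d : ℝ) (h0 : v 0 = (d:Rb) + u 0)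
    (h1 : v 1 = (d:Rb) + u 1) : projPt v = projPt u := by
  obtain (hu1 | ⟨b, hb⟩) := rb_cases (u 1)
  · rw [projPt_of_bot_snd v (by rw [h1, hu1]; simp), projPt_of_bot_snd u hu1]
  · obtain (hu0 | ⟨a, ha⟩) := rb_cases (u 0)
    · rw [projPt_of_bot_fst v (by rw [h0, hu0]; simp)
        (by rw [h1, hb, ← WithBot.coe_add]; exact WithBot.coe_ne_bot),
        projPt_of_bot_fst u hu0 (by rw [hb]; exact WithBot.coe_ne_bot)]
    · rw [projPt_coe v (d+a) (d+b) (by rw [h0, ha, ← WithBot.coe_add])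
        (by rw [h1, hb, ← WithBot.coe_add]), projPt_coe u a b ha hb]
      norm_num

lemma PSpan_zero_right (u : Fin 2 → Rb) (hu : u ≠ zeroVec) :
    PSpan u zeroVec = {projPt u} := by
  apply Set.Subset.antisymm
  · rintro z ⟨v, ⟨c0, c1, hc⟩, hv, rfl⟩
    have hc' : ∀ i, v i = c0 + u i := by
      intro i
      rw [hc i]
      simp [zeroVec]
    obtain (h | ⟨d, hd⟩) := rb_cases c0
    · exfalso
      apply hv
      funext i
      rw [hc' i, h]
      simp [zeroVec]
    · rw [Set.mem_singleton_iff]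
      exact projPt_shift v u d (by rw [hc' 0, hd]) (by rw [hc' 1, hd])
  · rintro z rfl
    exact mem_PSpan_left u zeroVec hu

lemma PSpan_zero_left (w : Fin 2 → Rb) (hw : w ≠ zeroVec) :
    PSpan zeroVec w = {projPt w} := by
  rw [PSpan_comm]; exact PSpan_zero_right w hw

lemma PSpan_scaled (x0 x1 : Rb) (u : Fin 2 → Rb) (hu : u ≠ zeroVec)
    (hx : x0 ≠ ⊥ ∨ x1 ≠ ⊥) :
    PSpan (fun i => x0 + u i) (fun i => x1 + u i) = {projPt u} := by
  have hne : ∀ d : ℝ, (fun i => ((d:ℝ):Rb) + u i) ≠ zeroVec := by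
    intro d h
    apply hu
    funext i
    have := congrFun h i
    simp only [zeroVec] at this ⊢
    rcases rb_cases (u i) with h' | ⟨r, hr⟩
    · exact h'
    · rw [hr, ← WithBot.coe_add] at this; exact absurd this WithBot.coe_ne_bot
  have hproj : ∀ d : ℝ, projPt (fun i => ((d:ℝ):Rb) + u i) = projPt u := by
    intro d
    exact projPt_shift _ u d rfl rfl
  obtain (h0 | ⟨d0, rfl⟩) := rb_cases x0 <;> obtain (h1 | ⟨d1, rfl⟩) := rb_cases x1
  · rcases hx with h | h
    · exact absurd h0 h
    · exact absurd h1 h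
  · have e0 : (fun i => x0 + u i) = zeroVec := by
      funext i; rw [h0]; simp [zeroVec]
    rw [e0, PSpan_zero_left _ (hne d1), hproj d1]
  · have e1 : (fun i => x1 + u i) = zeroVec := by
      funext i; rw [h1]; simp [zeroVec]
    rw [e1, PSpan_zero_right _ (hne d0), hproj d0]
  · rw [PSpan_eq_Icc _ _ (hne d0) (hne d1), hproj d0, hproj d1, inf_idem, sup_idem,
      Set.Icc_self]

-- ==================== concrete matrices ====================

lemma cols0 (a b c d : Rb) : (fun i => (![![a,b],![c,d]] : Mat2) i 0) = ![a, c] := by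
  funext i; fin_cases i <;> simp

lemma cols1 (a b c d : Rb) : (fun i => (![![a,b],![c,d]] : Mat2) i 1) = ![b, d] := by
  funext i; fin_cases i <;> simp

lemma vec_ne_zero_fst (r : ℝ) (c : Rb) : ![(r:Rb), c] ≠ zeroVec := by
  rw [ne_zeroVec_iff]; left; simp

lemma vec_ne_zero_snd (c : Rb) (r : ℝ) : ![c, (r:Rb)] ≠ zeroVec := by
  rw [ne_zeroVec_iff]; right; simp

lemma projPt_vec_coe (r s : ℝ) : projPt ![(r:Rb), (s:Rb)] = ((s - r : ℝ) : EReal) :=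
  projPt_coe _ r s (by simp) (by simp)

lemma projPt_vec_bot_snd (c : Rb) : projPt ![c, (⊥:Rb)] = ⊥ :=
  projPt_of_bot_snd _ (by simp)

lemma projPt_vec_bot_fst (r : ℝ) : projPt ![(⊥:Rb), (r:Rb)] = ⊤ :=
  projPt_of_bot_fst _ (by simp) (by simp)

lemma PC_mat (a b c d : Rb) (h1 : ![a,c] ≠ zeroVec) (h2 : ![b,d] ≠ zeroVec) :
    PC ![![a,b],![c,d]] =
      Set.Icc (projPt ![a,c] ⊓ projPt ![b,d]) (projPt ![a,c] ⊔ projPt ![b,d]) := by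
  rw [PC_eq, cols0, cols1, PSpan_eq_Icc _ _ h1 h2]

lemma PR_mat (a b c d : Rb) (h1 : ![a,b] ≠ zeroVec) (h2 : ![c,d] ≠ zeroVec) :
    PR ![![a,b],![c,d]] =
      Set.Icc (projPt ![a,b] ⊓ projPt ![c,d]) (projPt ![a,b] ⊔ projPt ![c,d]) := by
  have e0 : (![![a,b],![c,d]] : Mat2) 0 = ![a,b] := rfl
  have e1 : (![![a,b],![c,d]] : Mat2) 1 = ![c,d] := rfl
  rw [PR_eq, e0, e1, PSpan_eq_Icc _ _ h1 h2]

lemma PC_bot : PC (fun _ _ => (⊥:Rb)) = ∅ := by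
  rw [Set.eq_empty_iff_forall_notMem]
  rintro z ⟨v, ⟨c, hc⟩, hv, _⟩
  apply hv
  funext i
  rw [hc i, sup2]
  simp [zeroVec]

lemma PR_bot : PR (fun _ _ => (⊥:Rb)) = ∅ := by
  rw [Set.eq_empty_iff_forall_notMem]
  rintro z ⟨v, ⟨c, hc⟩, hv, _⟩
  apply hv
  funext i
  rw [hc i, sup2]
  simp [zeroVec]

noncomputable def uVec (m : EReal) : Fin 2 → Rb :=
  if m = ⊥ then ![((0:ℝ):Rb), ⊥] else if m = ⊤ then ![⊥, ((0:ℝ):Rb)]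
  else ![((0:ℝ):Rb), ((m.toReal : ℝ) : Rb)]

lemma uVec_ne_zero (m : EReal) : uVec m ≠ zeroVec := by
  unfold uVec
  split_ifs
  · exact vec_ne_zero_fst 0 ⊥
  · exact vec_ne_zero_snd ⊥ 0
  · exact vec_ne_zero_fst 0 _

lemma projPt_uVec (m : EReal) : projPt (uVec m) = m := by
  obtain (rfl | ⟨r, rfl⟩ | rfl) := ereal_cases m
  · rw [uVec, if_pos rfl, projPt_vec_bot_snd]
  · rw [uVec, if_neg (by simp), if_neg (by simp), projPt_vec_coe]
    simp [EReal.toReal_coe]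
  · rw [uVec, if_neg (by simp), if_pos rfl, projPt_vec_bot_fst]

lemma PC_outer (u w : Fin 2 → Rb) (hu : u ≠ zeroVec) (hw : w ≠ zeroVec) :
    PC (fun i j => u i + w j) = {projPt u} := by
  rw [PC_eq]
  have e0 : (fun i => u i + w 0) = (fun i => w 0 + u i) := by
    funext i; exact add_comm _ _
  have e1 : (fun i => u i + w 1) = (fun i => w 1 + u i) := by
    funext i; exact add_comm _ _
  show PSpan (fun i => u i + w 0) (fun i => u i + w 1) = {projPt u}
  rw [e0, e1]
  exact PSpan_scaled (w 0) (w 1) u hu ((ne_zeroVec_iff w).1 hw)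

lemma PR_outer (u w : Fin 2 → Rb) (hu : u ≠ zeroVec) (hw : w ≠ zeroVec) :
    PR (fun i j => u i + w j) = {projPt w} := by
  rw [PR_eq]
  show PSpan (fun j => u 0 + w j) (fun j => u 1 + w j) = {projPt w}
  exact PSpan_scaled (u 0) (u 1) w hw ((ne_zeroVec_iff u).1 hu)

-- ==================== delta lemmas ====================

def IsRealPt (x : EReal) : Prop := ∃ a : ℝ, x = (a : EReal)

lemma not_realPt_bot : ¬ IsRealPt (⊥ : EReal) := by
  rintro ⟨a, h⟩; exact (EReal.bot_ne_coe (x := a)) h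

lemma not_realPt_top : ¬ IsRealPt (⊤ : EReal) := by
  rintro ⟨a, h⟩; exact (EReal.top_ne_coe (x := a)) h

lemma delta_coe_coe (a b : ℝ) : delta (a : EReal) (b : EReal) = ENNReal.ofReal |a - b| := by
  rw [delta, if_pos ⟨⟨a, rfl⟩, ⟨b, rfl⟩⟩, EReal.toReal_coe, EReal.toReal_coe]

lemma delta_coe_coe_ne_top (a b : ℝ) : delta (a : EReal) (b : EReal) ≠ ⊤ := by
  rw [delta_coe_coe]; exact ENNReal.ofReal_ne_top

lemma delta_coe_coe_eq_zero_iff (a b : ℝ) : delta (a : EReal) (b : EReal) = 0 ↔ a = b := by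
  rw [delta_coe_coe, ENNReal.ofReal_eq_zero]
  constructor
  · intro h
    have h2 : |a - b| = 0 := le_antisymm h (abs_nonneg (a - b))
    have := abs_eq_zero.1 h2; linarith
  · rintro rfl; simp

lemma both_real_of_delta (x y : EReal) (h0 : delta x y ≠ 0) (ht : delta x y ≠ ⊤) :
    IsRealPt x ∧ IsRealPt y := by
  by_contra hc
  rw [delta, if_neg (by simpa [IsRealPt] using hc)] at h0 ht
  by_cases h : x = y
  · rw [if_pos h] at h0; exact h0 rfl
  · rw [if_neg h] at ht; exact ht rfl

lemma delta_of_mixed (x y : EReal) (hx : ¬ IsRealPt x) (hy : IsRealPt y) : delta x y = ⊤ := by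
  have hne : x ≠ y := by rintro rfl; exact hx hy
  rw [delta, if_neg (by rintro ⟨h1, _⟩; exact hx h1), if_neg hne]

end Aux

/-- any pair of isometric closed convex subsets of `ℝ̂` is realised as the
projective column space and projective row space of a single `2 × 2` tropical matrix. -/
theorem exists_matrix_with_given_col_row_spaces (M N : Set EReal)
    (hM : IsClosedConvex M) (hN : IsClosedConvex N) (hMN : Isom M N) :
    ∃ Z : Mat2, PC Z = M ∧ PR Z = N := by
  obtain ⟨f, hbij, hd⟩ := hMN
  obtain (rfl | ⟨x, y, hxy, rfl⟩) := hM
  · -- M = ∅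
    have hN' : N = ∅ := by rw [← hbij.image_eq, Set.image_empty]
    exact ⟨fun _ _ => ⊥, PC_bot, by rw [PR_bot, hN']⟩
  obtain (rfl | ⟨x', y', hxy', rfl⟩) := hN
  · exact absurd (hbij.mapsTo (Set.left_mem_Icc.2 hxy)) (Set.notMem_empty _)
  rcases eq_or_lt_of_le hxy with rfl | hlt
  · -- singleton case
    have hNs : Set.Icc x' y' = {f x} := by
      rw [← hbij.image_eq, Set.Icc_self, Set.image_singleton]
    refine ⟨fun i j => uVec x i + uVec (f x) j, ?_, ?_⟩
    · rw [PC_outer _ _ (uVec_ne_zero x) (uVec_ne_zero (f x)), projPt_uVec, Set.Icc_self]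
    · rw [PR_outer _ _ (uVec_ne_zero x) (uVec_ne_zero (f x)), projPt_uVec, hNs]
  -- main case : x < y
  obtain ⟨z1, hz1, hz1'⟩ := exists_between hlt
  obtain ⟨z2, hz2, hz2'⟩ := exists_between hz1'
  obtain ⟨r1, rfl⟩ : ∃ r : ℝ, z1 = (r : EReal) :=
    ((ereal_cases z1).resolve_left (ne_bot_of_gt hz1)).resolve_right (ne_top_of_lt hz2)
  obtain ⟨r2, rfl⟩ : ∃ r : ℝ, z2 = (r : EReal) :=
    ((ereal_cases z2).resolve_left (ne_bot_of_gt hz2)).resolve_right (ne_top_of_lt hz2')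
  have hr1M : (r1 : EReal) ∈ Set.Icc x y := ⟨le_of_lt hz1, le_of_lt (lt_trans hz2 hz2')⟩
  have hr2M : (r2 : EReal) ∈ Set.Icc x y := ⟨le_of_lt (lt_trans hz1 hz2), le_of_lt hz2'⟩
  have hr12 : r1 ≠ r2 := ne_of_lt (EReal.coe_lt_coe_iff.1 hz2)
  -- key facts about f
  have L1 : ∀ p ∈ Set.Icc x y, IsRealPt p → IsRealPt (f p) := by
    rintro p hp ⟨a, rfl⟩
    have hex : ∃ r : ℝ, (r : EReal) ∈ Set.Icc x y ∧ r ≠ a := by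
      by_cases har : a = r1
      · exact ⟨r2, hr2M, fun h => hr12 (har ▸ h.symm)⟩
      · exact ⟨r1, hr1M, fun h => har h.symm⟩
    obtain ⟨r, hrM, hra⟩ := hex
    have hda : delta (f ↑a) (f ↑r) = delta (a : EReal) (r : EReal) := hd _ hp _ hrM
    have h0 : delta (f ↑a) (f ↑r) ≠ 0 := by
      rw [hda, Ne, delta_coe_coe_eq_zero_iff]
      exact fun h => hra h.symm
    have ht : delta (f ↑a) (f ↑r) ≠ ⊤ := by
      rw [hda]; exact delta_coe_coe_ne_top a r
    exact (both_real_of_delta _ _ h0 ht).1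
  have hfr1 : IsRealPt (f ↑r1) := L1 _ hr1M ⟨r1, rfl⟩
  have L2 : ∀ p ∈ Set.Icc x y, ¬ IsRealPt p → ¬ IsRealPt (f p) := by
    intro p hp hnp hfp
    have h1 : delta p ↑r1 = ⊤ := delta_of_mixed p _ hnp ⟨r1, rfl⟩
    have h2 : delta (f p) (f ↑r1) = ⊤ := (hd _ hp _ hr1M).trans h1
    obtain ⟨s, hs⟩ := hfp
    obtain ⟨t, ht⟩ := hfr1
    rw [hs, ht] at h2
    exact delta_coe_coe_ne_top s t h2
  have L3 : ∀ q ∈ Set.Icc x' y', ¬ IsRealPt q → ∃ p ∈ Set.Icc x y, ¬ IsRealPt p ∧ f p = q := by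
    intro q hq hnq
    obtain ⟨p, hp, hfp⟩ := hbij.surjOn hq
    exact ⟨p, hp, fun hrp => hnq (hfp ▸ L1 p hp hrp), hfp⟩
  have hx'y' : x' < y' := by
    rcases eq_or_lt_of_le hxy' with rfl | h
    · exfalso
      have h1 : f ↑r1 ∈ Set.Icc x' x' := hbij.mapsTo hr1M
      have h2 : f ↑r2 ∈ Set.Icc x' x' := hbij.mapsTo hr2M
      rw [Set.Icc_self, Set.mem_singleton_iff] at h1 h2
      exact hr12 (EReal.coe_eq_coe_iff.1 (hbij.injOn hr1M hr2M (h1.trans h2.symm)))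
    · exact h
  obtain (rfl | ⟨a, rfl⟩ | hxtop) := ereal_cases x
  · -- x = ⊥
    obtain (rfl | ⟨b, rfl⟩ | rfl) := ereal_cases y
    · exact absurd hlt (lt_irrefl _)
    · -- Case B : M = Icc ⊥ ↑b
      have hbotM : (⊥ : EReal) ∈ Set.Icc (⊥ : EReal) (↑b : EReal) := ⟨le_refl _, bot_le⟩
      have hfbotnr : ¬ IsRealPt (f ⊥) := L2 ⊥ hbotM not_realPt_bot
      have hfbotN : f ⊥ ∈ Set.Icc x' y' := hbij.mapsTo hbotM
      obtain (hfb | ⟨r, hr⟩ | hfb) := ereal_cases (f ⊥)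
      · -- B1 : f ⊥ = ⊥
        have hx'b : x' = ⊥ := le_bot_iff.1 (hfb ▸ hfbotN.1)
        obtain ⟨b', rfl⟩ : ∃ b' : ℝ, y' = (b' : EReal) := by
          obtain (h | h | rfl) := ereal_cases y'
          · exact absurd h (ne_bot_of_gt hx'y')
          · exact h
          · exfalso
            obtain ⟨p, hpM, hnp, hfp⟩ := L3 ⊤ ⟨le_top, le_refl _⟩ not_realPt_top
            obtain (rfl | ⟨r, rfl⟩ | rfl) := ereal_cases p
            · rw [hfb] at hfp; exact (by simp : (⊥ : EReal) ≠ ⊤) hfp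
            · exact hnp ⟨r, rfl⟩
            · exact absurd hpM.2 (by simp)
        subst hx'b
        refine ⟨![![((0:ℝ):Rb), ((b':ℝ):Rb)], ![((b:ℝ):Rb), ⊥]], ?_, ?_⟩
        · rw [PC_mat _ _ _ _ (vec_ne_zero_fst 0 _) (vec_ne_zero_fst b' _),
            projPt_vec_coe, projPt_vec_bot_snd]
          rw [inf_bot_eq _, sup_bot_eq _]
          norm_num
        · rw [PR_mat _ _ _ _ (vec_ne_zero_fst 0 _) (vec_ne_zero_fst b ⊥),
            projPt_vec_coe, projPt_vec_bot_snd]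
          rw [inf_bot_eq _, sup_bot_eq _]
          norm_num
      · exact absurd ⟨r, hr⟩ hfbotnr
      · -- B2 : f ⊥ = ⊤
        have hy't : y' = ⊤ := top_le_iff.1 (hfb ▸ hfbotN.2)
        obtain ⟨a', rfl⟩ : ∃ a' : ℝ, x' = (a' : EReal) := by
          obtain (rfl | h | h) := ereal_cases x'
          · exfalso
            obtain ⟨p, hpM, hnp, hfp⟩ := L3 ⊥ ⟨le_refl _, bot_le⟩ not_realPt_bot
            obtain (rfl | ⟨r, rfl⟩ | rfl) := ereal_cases p
            · rw [hfb] at hfp; exact (by simp : (⊤ : EReal) ≠ ⊥) hfp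
            · exact hnp ⟨r, rfl⟩
            · exact absurd hpM.2 (by simp)
          · exact h
          · exact absurd h (ne_top_of_lt hx'y')
        subst hy't
        refine ⟨![![((0:ℝ):Rb), ((a':ℝ):Rb)], ![⊥, ((a'+b:ℝ):Rb)]], ?_, ?_⟩
        · rw [PC_mat _ _ _ _ (vec_ne_zero_fst 0 ⊥) (vec_ne_zero_fst a' _),
            projPt_vec_bot_snd, projPt_vec_coe]
          rw [bot_inf_eq _, bot_sup_eq _]
          norm_num
        · rw [PR_mat _ _ _ _ (vec_ne_zero_fst 0 _) (vec_ne_zero_snd ⊥ (a'+b)),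
            projPt_vec_coe, projPt_vec_bot_fst]
          rw [inf_top_eq _, sup_top_eq _]
          norm_num
    · -- Case D : M = Icc ⊥ ⊤
      have hbotM : (⊥ : EReal) ∈ Set.Icc (⊥ : EReal) (⊤ : EReal) := ⟨le_refl _, bot_le⟩
      have htopM : (⊤ : EReal) ∈ Set.Icc (⊥ : EReal) (⊤ : EReal) := ⟨bot_le, le_refl _⟩
      have hfbotnr : ¬ IsRealPt (f ⊥) := L2 ⊥ hbotM not_realPt_bot
      have hftopnr : ¬ IsRealPt (f ⊤) := L2 ⊤ htopM not_realPt_top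
      have hne : f ⊥ ≠ f ⊤ := by
        intro h
        exact (by simp : (⊥ : EReal) ≠ ⊤) (hbij.injOn hbotM htopM h)
      have hmem : (⊥ : EReal) ∈ Set.Icc x' y' ∧ (⊤ : EReal) ∈ Set.Icc x' y' := by
        obtain (hfb | ⟨r, hr⟩ | hfb) := ereal_cases (f ⊥)
        · have hft : f ⊤ = ⊤ := by
            obtain (h | ⟨r, hr⟩ | h) := ereal_cases (f ⊤)
            · exact absurd (hfb.trans h.symm) hne
            · exact absurd ⟨r, hr⟩ hftopnr
            · exact h
          exact ⟨hfb ▸ hbij.mapsTo hbotM, hft ▸ hbij.mapsTo htopM⟩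
        · exact absurd ⟨r, hr⟩ hfbotnr
        · have hft : f ⊤ = ⊥ := by
            obtain (h | ⟨r, hr⟩ | h) := ereal_cases (f ⊤)
            · exact h
            · exact absurd ⟨r, hr⟩ hftopnr
            · exact absurd (hfb.trans h.symm) hne
          exact ⟨hft ▸ hbij.mapsTo htopM, hfb ▸ hbij.mapsTo hbotM⟩
      have hx'b : x' = ⊥ := le_bot_iff.1 hmem.1.1
      have hy't : y' = ⊤ := top_le_iff.1 hmem.2.2
      subst hx'b; subst hy't
      refine ⟨![![((0:ℝ):Rb), ⊥], ![⊥, ((0:ℝ):Rb)]], ?_, ?_⟩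
      · rw [PC_mat _ _ _ _ (vec_ne_zero_fst 0 ⊥) (vec_ne_zero_snd ⊥ 0),
          projPt_vec_bot_snd, projPt_vec_bot_fst]
        rw [bot_inf_eq _, bot_sup_eq _]
      · rw [PR_mat _ _ _ _ (vec_ne_zero_fst 0 ⊥) (vec_ne_zero_snd ⊥ 0),
          projPt_vec_bot_snd, projPt_vec_bot_fst]
        rw [bot_inf_eq _, bot_sup_eq _]
  · -- x = ↑a
    obtain (rfl | ⟨b, rfl⟩ | rfl) := ereal_cases y
    · exact absurd hlt (by simp)
    · -- Case A : M = Icc ↑a ↑b, both finite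
      have hab : a < b := EReal.coe_lt_coe_iff.1 hlt
      have hMreal : ∀ p ∈ Set.Icc (↑a : EReal) (↑b : EReal), IsRealPt p := by
        intro p hp
        obtain (rfl | ⟨r, rfl⟩ | rfl) := ereal_cases p
        · exact absurd hp.1 (by simp)
        · exact ⟨r, rfl⟩
        · exact absurd hp.2 (by simp)
      obtain ⟨a', rfl⟩ : ∃ a' : ℝ, x' = (a' : EReal) := by
        by_contra hcon
        push_neg at hcon
        obtain ⟨p, hpM, hnp, _⟩ := L3 x' (Set.left_mem_Icc.2 hxy')
          (by rintro ⟨r, hr⟩; exact hcon r hr)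
        exact hnp (hMreal p hpM)
      obtain ⟨b', rfl⟩ : ∃ b' : ℝ, y' = (b' : EReal) := by
        by_contra hcon
        push_neg at hcon
        obtain ⟨p, hpM, hnp, _⟩ := L3 y' (Set.right_mem_Icc.2 hxy')
          (by rintro ⟨r, hr⟩; exact hcon r hr)
        exact hnp (hMreal p hpM)
      have hab' : a' < b' := EReal.coe_lt_coe_iff.1 hx'y'
      -- lengths are equal
      have haM : (↑a : EReal) ∈ Set.Icc (↑a : EReal) (↑b : EReal) := Set.left_mem_Icc.2 hxy
      have hbM : (↑b : EReal) ∈ Set.Icc (↑a : EReal) (↑b : EReal) := Set.right_mem_Icc.2 hxy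
      obtain ⟨s, hfs⟩ := L1 ↑a haM ⟨a, rfl⟩
      obtain ⟨t, hft⟩ := L1 ↑b hbM ⟨b, rfl⟩
      have hsN : a' ≤ s ∧ s ≤ b' := by
        have := hbij.mapsTo haM
        rw [hfs] at this
        exact ⟨EReal.coe_le_coe_iff.1 this.1, EReal.coe_le_coe_iff.1 this.2⟩
      have htN : a' ≤ t ∧ t ≤ b' := by
        have := hbij.mapsTo hbM
        rw [hft] at this
        exact ⟨EReal.coe_le_coe_iff.1 this.1, EReal.coe_le_coe_iff.1 this.2⟩
      have hd1 : delta (f ↑a) (f ↑b) = delta (↑a : EReal) (↑b : EReal) := hd _ haM _ hbM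
      rw [hfs, hft, delta_coe_coe, delta_coe_coe] at hd1
      have habs1 : |s - t| = |a - b| :=
        (ENNReal.ofReal_eq_ofReal_iff (abs_nonneg _) (abs_nonneg _)).1 hd1
      have hle1 : b - a ≤ b' - a' := by
        have h1 : |s - t| ≤ b' - a' := abs_le.2 ⟨by linarith [hsN.1, hsN.2, htN.1, htN.2],
          by linarith [hsN.1, hsN.2, htN.1, htN.2]⟩
        have h2 : |a - b| = b - a := by rw [abs_sub_comm]; exact abs_of_nonneg (by linarith)
        linarith [habs1 ▸ h1]
      have hle2 : b' - a' ≤ b - a := by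
        obtain ⟨p, hpM, hfp⟩ := hbij.surjOn (Set.left_mem_Icc.2 hxy')
        obtain ⟨pa, rfl⟩ := hMreal p hpM
        obtain ⟨q, hqM, hfq⟩ := hbij.surjOn (Set.right_mem_Icc.2 hxy')
        obtain ⟨qa, rfl⟩ := hMreal q hqM
        have hd2 : delta (f ↑pa) (f ↑qa) = delta (↑pa : EReal) (↑qa : EReal) := hd _ hpM _ hqM
        rw [hfp, hfq, delta_coe_coe, delta_coe_coe] at hd2
        have habs2 : |a' - b'| = |pa - qa| :=
          (ENNReal.ofReal_eq_ofReal_iff (abs_nonneg _) (abs_nonneg _)).1 hd2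
        have hpa : a ≤ pa ∧ pa ≤ b := ⟨EReal.coe_le_coe_iff.1 hpM.1, EReal.coe_le_coe_iff.1 hpM.2⟩
        have hqa : a ≤ qa ∧ qa ≤ b := ⟨EReal.coe_le_coe_iff.1 hqM.1, EReal.coe_le_coe_iff.1 hqM.2⟩
        have h1 : |pa - qa| ≤ b - a := abs_le.2 ⟨by linarith [hpa.1, hpa.2, hqa.1, hqa.2],
          by linarith [hpa.1, hpa.2, hqa.1, hqa.2]⟩
        have h2 : |a' - b'| = b' - a' := by rw [abs_sub_comm]; exact abs_of_nonneg (by linarith)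
        linarith [habs2 ▸ h1]
      have hkey : a + b' - a' = b := by linarith
      refine ⟨![![((0:ℝ):Rb), ((a':ℝ):Rb)], ![((a:ℝ):Rb), ((a+b':ℝ):Rb)]], ?_, ?_⟩
      · rw [PC_mat _ _ _ _ (vec_ne_zero_fst 0 _) (vec_ne_zero_fst a' _),
          projPt_vec_coe, projPt_vec_coe]
        have e1 : ((a - 0 : ℝ) : EReal) = (a : EReal) := by norm_num
        have e2 : ((a + b' - a' : ℝ) : EReal) = (b : EReal) := by rw [hkey]
        rw [e1, e2, inf_eq_left.2 (le_of_lt hlt), sup_eq_right.2 (le_of_lt hlt)]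
      · rw [PR_mat _ _ _ _ (vec_ne_zero_fst 0 _) (vec_ne_zero_fst a _),
          projPt_vec_coe, projPt_vec_coe]
        have e1 : ((a' - 0 : ℝ) : EReal) = (a' : EReal) := by norm_num
        have e2 : ((a + b' - a : ℝ) : EReal) = (b' : EReal) := by norm_num
        rw [e1, e2, inf_eq_left.2 (le_of_lt hx'y'), sup_eq_right.2 (le_of_lt hx'y')]
    · -- Case C : M = Icc ↑a ⊤
      have htopM : (⊤ : EReal) ∈ Set.Icc (↑a : EReal) (⊤ : EReal) := ⟨le_top, le_refl _⟩
      have hftopnr : ¬ IsRealPt (f ⊤) := L2 ⊤ htopM not_realPt_top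
      have hftopN : f ⊤ ∈ Set.Icc x' y' := hbij.mapsTo htopM
      obtain (hfb | ⟨r, hr⟩ | hfb) := ereal_cases (f ⊤)
      · -- C2 : f ⊤ = ⊥
        have hx'b : x' = ⊥ := le_bot_iff.1 (hfb ▸ hftopN.1)
        obtain ⟨b', rfl⟩ : ∃ b' : ℝ, y' = (b' : EReal) := by
          obtain (h | h | rfl) := ereal_cases y'
          · exact absurd h (ne_bot_of_gt hx'y')
          · exact h
          · exfalso
            obtain ⟨p, hpM, hnp, hfp⟩ := L3 ⊤ ⟨le_top, le_refl _⟩ not_realPt_top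
            obtain (rfl | ⟨r, rfl⟩ | rfl) := ereal_cases p
            · exact absurd hpM.1 (by simp)
            · exact hnp ⟨r, rfl⟩
            · rw [hfb] at hfp; exact (by simp : (⊥ : EReal) ≠ ⊤) hfp
        subst hx'b
        refine ⟨![![((0:ℝ):Rb), ⊥], ![((a:ℝ):Rb), ((a+b':ℝ):Rb)]], ?_, ?_⟩
        · rw [PC_mat _ _ _ _ (vec_ne_zero_fst 0 _) (vec_ne_zero_snd ⊥ (a+b')),
            projPt_vec_coe, projPt_vec_bot_fst]
          rw [inf_top_eq _, sup_top_eq _]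
          norm_num
        · rw [PR_mat _ _ _ _ (vec_ne_zero_fst 0 ⊥) (vec_ne_zero_fst a _),
            projPt_vec_bot_snd, projPt_vec_coe]
          rw [bot_inf_eq _, bot_sup_eq _]
          norm_num
      · exact absurd ⟨r, hr⟩ hftopnr
      · -- C1 : f ⊤ = ⊤
        have hy't : y' = ⊤ := top_le_iff.1 (hfb ▸ hftopN.2)
        obtain ⟨a', rfl⟩ : ∃ a' : ℝ, x' = (a' : EReal) := by
          obtain (rfl | h | h) := ereal_cases x'
          · exfalso
            obtain ⟨p, hpM, hnp, hfp⟩ := L3 ⊥ ⟨le_refl _, bot_le⟩ not_realPt_bot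
            obtain (rfl | ⟨r, rfl⟩ | rfl) := ereal_cases p
            · exact absurd hpM.1 (by simp)
            · exact hnp ⟨r, rfl⟩
            · rw [hfb] at hfp; exact (by simp : (⊤ : EReal) ≠ ⊥) hfp
          · exact h
          · exact absurd h (ne_top_of_lt hx'y')
        subst hy't
        refine ⟨![![⊥, ((-a:ℝ):Rb)], ![((-a':ℝ):Rb), ((0:ℝ):Rb)]], ?_, ?_⟩
        · rw [PC_mat _ _ _ _ (vec_ne_zero_snd ⊥ (-a')) (vec_ne_zero_fst (-a) _),
            projPt_vec_bot_fst, projPt_vec_coe]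
          rw [top_inf_eq _, top_sup_eq _]
          norm_num
        · rw [PR_mat _ _ _ _ (vec_ne_zero_snd ⊥ (-a)) (vec_ne_zero_fst (-a') _),
            projPt_vec_bot_fst, projPt_vec_coe]
          rw [top_inf_eq _, top_sup_eq _]
          norm_num
  · exact absurd hxtop (ne_top_of_lt hlt)
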